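/- If Y₁ ~ NG(0,1,θ₁) and Y₂ ~ NG(0,1,θ₂) with θ₁ > θ₂ (both < 1), then the likelihood ratio f(y;0,1,θ₁)/f(y;0,1,θ₂) is a strictly increasing function of y; in particular its logarithm v(y) = log((1-θ₁)/(1-θ₂)) + 2log(1-θ₂Φ(y)) - 2log(1-θ₁Φ(y)) has derivative v'(y) = 2(θ₁-θ₂)φ(y)/[(1-θ₂Φ(y))(1-θ₁Φ(y))] > 0 for all y. -/

import Mathlib

open MeasureTheory Filter Topology

noncomputable def stdPdf (x : ℝ) : ℝ := (Real.sqrt (2 * Real.pi))⁻¹ * Real.exp (-(x ^ 2) / 2)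

noncomputable def stdCdf (x : ℝ) : ℝ := ∫ t in Set.Iic x, stdPdf t

lemma stdPdf_pos (x : ℝ) : 0 < stdPdf x := by
  have h : 0 < Real.sqrt (2 * Real.pi) := Real.sqrt_pos.2 (by positivity)
  exact mul_pos (inv_pos.2 h) (Real.exp_pos _)

lemma stdPdf_eq (x : ℝ) : stdPdf x = (Real.sqrt (2 * Real.pi))⁻¹ * Real.exp (-(1/2) * x ^ 2) := by
  unfold stdPdf; ring_nf

lemma continuous_stdPdf : Continuous stdPdf := by
  unfold stdPdf
  continuity

lemma integrable_stdPdf : Integrable stdPdf := by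
  have : Integrable (fun x : ℝ => Real.exp (-(1/2) * x ^ 2)) := integrable_exp_neg_mul_sq (by norm_num)
  have h := this.const_mul (Real.sqrt (2 * Real.pi))⁻¹
  refine h.congr (Filter.Eventually.of_forall fun x => ?_)
  rw [stdPdf_eq]

lemma integral_stdPdf : ∫ x, stdPdf x = 1 := by
  have h : ∫ x : ℝ, Real.exp (-(1/2) * x ^ 2) = Real.sqrt (Real.pi / (1/2)) :=
    integral_gaussian (1/2)
  have : ∫ x, stdPdf x = (Real.sqrt (2 * Real.pi))⁻¹ * ∫ x : ℝ, Real.exp (-(1/2) * x ^ 2) := by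
    rw [← integral_const_mul]
    exact integral_congr_ae (Filter.Eventually.of_forall fun x => stdPdf_eq x)
  rw [this, h]
  have h2 : Real.pi / (1/2) = 2 * Real.pi := by ring
  rw [h2, inv_mul_cancel₀ (ne_of_gt (Real.sqrt_pos.2 (by positivity)))]

lemma stdCdf_sub (a b : ℝ) : stdCdf b - stdCdf a = ∫ x in a..b, stdPdf x :=
  intervalIntegral.integral_Iic_sub_Iic integrable_stdPdf.integrableOn integrable_stdPdf.integrableOn

lemma stdCdf_strictMono : StrictMono stdCdf := by
  intro a b hab
  have h : 0 < ∫ x in a..b, stdPdf x :=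
    intervalIntegral.intervalIntegral_pos_of_pos (continuous_stdPdf.intervalIntegrable a b) stdPdf_pos hab
  have := stdCdf_sub a b
  linarith

lemma stdCdf_pos (x : ℝ) : 0 < stdCdf x := by
  have h0 : 0 ≤ stdCdf (x - 1) :=
    setIntegral_nonneg measurableSet_Iic (fun t _ => (stdPdf_pos t).le)
  have := stdCdf_strictMono (show x - 1 < x by linarith)
  linarith

lemma stdCdf_lt_one (x : ℝ) : stdCdf x < 1 := by
  have h1 : stdCdf (x + 1) ≤ 1 := by
    rw [← integral_stdPdf]
    exact setIntegral_le_integral integrable_stdPdf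
      (Filter.Eventually.of_forall fun t => (stdPdf_pos t).le)
  have := stdCdf_strictMono (show x < x + 1 by linarith)
  linarith

lemma hasDerivAt_stdCdf (y : ℝ) : HasDerivAt stdCdf (stdPdf y) y := by
  have key : ∀ x : ℝ, stdCdf x = stdCdf 0 + ∫ t in (0:ℝ)..x, stdPdf t := by
    intro x
    have := stdCdf_sub 0 x
    linarith
  have hd : HasDerivAt (fun x => stdCdf 0 + ∫ t in (0:ℝ)..x, stdPdf t) (stdPdf y) y := by
    have := (intervalIntegral.integral_hasDerivAt_right
      (continuous_stdPdf.intervalIntegrable 0 y)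
      (continuous_stdPdf.aestronglyMeasurable.stronglyMeasurableAtFilter)
      continuous_stdPdf.continuousAt)
    exact this.const_add (stdCdf 0)
  exact hd.congr_of_eventuallyEq (Filter.Eventually.of_forall key)

lemma one_sub_pos {θ : ℝ} (hθ : θ < 1) (y : ℝ) : 0 < 1 - θ * stdCdf y := by
  rcases le_or_gt θ 0 with h | h
  · nlinarith [stdCdf_pos y, stdCdf_lt_one y]
  · nlinarith [stdCdf_pos y, stdCdf_lt_one y]

/-- for θ₂ < θ₁ < 1, the NG(0,1,θ₁)/NG(0,1,θ₂) likelihood ratio is strictly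
increasing; its logarithm `v` has derivative
`v'(y) = 2(θ₁-θ₂)φ(y)/[(1-θ₂Φ(y))(1-θ₁Φ(y))] > 0`. -/
theorem ng_likelihood_ratio_increasing (θ₁ θ₂ : ℝ) (h1 : θ₁ < 1) (h2 : θ₂ < 1)
    (h12 : θ₂ < θ₁) :
    StrictMono (fun y => ((1 - θ₁) * stdPdf y / (1 - θ₁ * stdCdf y) ^ 2)
        / ((1 - θ₂) * stdPdf y / (1 - θ₂ * stdCdf y) ^ 2)) ∧
    ∀ y : ℝ,
      HasDerivAt (fun y => Real.log ((1 - θ₁) / (1 - θ₂))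
          + 2 * Real.log (1 - θ₂ * stdCdf y) - 2 * Real.log (1 - θ₁ * stdCdf y))
        (2 * (θ₁ - θ₂) * stdPdf y / ((1 - θ₂ * stdCdf y) * (1 - θ₁ * stdCdf y))) y ∧
      0 < 2 * (θ₁ - θ₂) * stdPdf y / ((1 - θ₂ * stdCdf y) * (1 - θ₁ * stdCdf y)) := by
  set v : ℝ → ℝ := fun y => Real.log ((1 - θ₁) / (1 - θ₂))
      + 2 * Real.log (1 - θ₂ * stdCdf y) - 2 * Real.log (1 - θ₁ * stdCdf y) with hv
  have hder : ∀ y : ℝ, HasDerivAt v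
      (2 * (θ₁ - θ₂) * stdPdf y / ((1 - θ₂ * stdCdf y) * (1 - θ₁ * stdCdf y))) y := by
    intro y
    have hp2 := one_sub_pos h2 y
    have hp1 := one_sub_pos h1 y
    have hc := hasDerivAt_stdCdf y
    have d2 : HasDerivAt (fun y => 1 - θ₂ * stdCdf y) (-(θ₂ * stdPdf y)) y := by
      simpa using ((hc.const_mul θ₂).const_sub 1)
    have d1 : HasDerivAt (fun y => 1 - θ₁ * stdCdf y) (-(θ₁ * stdPdf y)) y := by
      simpa using ((hc.const_mul θ₁).const_sub 1)
    have l2 : HasDerivAt (fun y => Real.log (1 - θ₂ * stdCdf y))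
        (-(θ₂ * stdPdf y) / (1 - θ₂ * stdCdf y)) y := d2.log hp2.ne'
    have l1 : HasDerivAt (fun y => Real.log (1 - θ₁ * stdCdf y))
        (-(θ₁ * stdPdf y) / (1 - θ₁ * stdCdf y)) y := d1.log hp1.ne'
    have hsum := ((l2.const_mul 2).sub (l1.const_mul 2)).const_add (Real.log ((1 - θ₁) / (1 - θ₂)))
    have hkey : 2 * (-(θ₂ * stdPdf y) / (1 - θ₂ * stdCdf y))
        - 2 * (-(θ₁ * stdPdf y) / (1 - θ₁ * stdCdf y))
        = 2 * (θ₁ - θ₂) * stdPdf y / ((1 - θ₂ * stdCdf y) * (1 - θ₁ * stdCdf y)) := by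
      rw [mul_div_assoc', mul_div_assoc', div_sub_div _ _ hp2.ne' hp1.ne', div_eq_div_iff
        (mul_ne_zero hp2.ne' hp1.ne') (mul_ne_zero hp2.ne' hp1.ne')]
      ring
    rw [← hkey]
    exact hsum.congr_of_eventuallyEq (Filter.Eventually.of_forall fun x => by
      simp only [hv, Pi.sub_apply]; ring)
  have hpos : ∀ y : ℝ,
      0 < 2 * (θ₁ - θ₂) * stdPdf y / ((1 - θ₂ * stdCdf y) * (1 - θ₁ * stdCdf y)) := by
    intro y
    have := stdPdf_pos y
    have hp2 := one_sub_pos h2 y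
    have hp1 := one_sub_pos h1 y
    exact div_pos (mul_pos (mul_pos (by norm_num) (by linarith)) this) (mul_pos hp2 hp1)
  have hvmono : StrictMono v := by
    apply strictMono_of_deriv_pos
    intro y
    rw [(hder y).deriv]
    exact hpos y
  refine ⟨?_, fun y => ⟨hder y, hpos y⟩⟩
  have heq : (fun y => ((1 - θ₁) * stdPdf y / (1 - θ₁ * stdCdf y) ^ 2)
      / ((1 - θ₂) * stdPdf y / (1 - θ₂ * stdCdf y) ^ 2)) = fun y => Real.exp (v y) := by
    funext y
    have hp2 := one_sub_pos h2 y
    have hp1 := one_sub_pos h1 y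
    have hφ := stdPdf_pos y
    have e2 : (2:ℝ) * Real.log (1 - θ₂ * stdCdf y) = Real.log ((1 - θ₂ * stdCdf y) ^ 2) := by
      rw [Real.log_pow]; push_cast; ring
    have e1 : (2:ℝ) * Real.log (1 - θ₁ * stdCdf y) = Real.log ((1 - θ₁ * stdCdf y) ^ 2) := by
      rw [Real.log_pow]; push_cast; ring
    show _ = Real.exp (Real.log ((1 - θ₁) / (1 - θ₂))
        + 2 * Real.log (1 - θ₂ * stdCdf y) - 2 * Real.log (1 - θ₁ * stdCdf y))
    rw [e2, e1, Real.exp_sub, Real.exp_add,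
      Real.exp_log (div_pos (by linarith) (by linarith)),
      Real.exp_log (by positivity), Real.exp_log (by positivity)]
    have hC : (1 - θ₂) ≠ 0 := by linarith
    have hB : ((1 - θ₁ * stdCdf y) ^ 2) ≠ 0 := pow_ne_zero _ hp1.ne'
    have hD : ((1 - θ₂ * stdCdf y) ^ 2) ≠ 0 := pow_ne_zero _ hp2.ne'
    field_simp
  rw [heq]
  exact fun a b hab => Real.exp_lt_exp.2 (hvmono hab)
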